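/- Let f : D ⟶ D′ be a natural transformation between Dirichlet functors. Then f is cartesian (every naturality square is a pullback) if and only if the single naturality square associated to the unique map 0 → 1, namely the square with top edge f₁ : D(1) → D′(1), bottom edge f₀ : D(0) → D′(0), and vertical edges D(0!) and D′(0!), is a pullback square. -/

import Mathlib

/- STATEMENT 13: Let `f : D ⟶ D′` be a natural transformation between Dirichlet functors.
Then `f` is cartesian (every naturality square is a pullback) if and only if the single
naturality square associated to the unique map `0 → 1` — the square with top edge
`f₁ : D(1) → D′(1)`, bottom edge `f₀ : D(0) → D′(0)`, and vertical edges `D(0!)` and `D′(0!)`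
— is a pullback square. -/

open CategoryTheory CategoryTheory.Limits Opposite

noncomputable section

noncomputable instance (X Y : FintypeCat.{0}) : Fintype (X ⟶ Y) := by
  haveI : Finite (X ⟶ Y) := Finite.of_injective (fun f : X ⟶ Y => (f : X → Y))
    (fun f g h => FintypeCat.hom_ext _ _ (congrFun h))
  exact Fintype.ofFinite _

/-- The finite coproduct `∐ᵢ Fin(–, dᵢ)` of representable presheaves `FintypeCatᵒᵖ ⥤ FintypeCat`. -/
def dirichletSum {I : Type} [Fintype I] (d : I → FintypeCat.{0}) :
    FintypeCat.{0}ᵒᵖ ⥤ FintypeCat.{0} where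
  obj X := FintypeCat.of (Σ i, (X.unop ⟶ d i))
  map f := FintypeCat.homMk (fun x => ⟨x.1, f.unop ≫ x.2⟩)

/-- A Dirichlet functor is a finite coproduct of representable presheaves. -/
def IsDirichlet (D : FintypeCat.{0}ᵒᵖ ⥤ FintypeCat.{0}) : Prop :=
  ∃ (I : Type) (_ : Fintype I) (d : I → FintypeCat.{0}), Nonempty (D ≅ dirichletSum d)

/-- The empty finite set `0`. -/
abbrev X0 : FintypeCat.{0} := FintypeCat.of PEmpty

/-- A one-element finite set `1`. -/
abbrev X1 : FintypeCat.{0} := FintypeCat.of PUnit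

/-- The unique function `0! : 0 → 1`. -/
def zeroToOne : X0 ⟶ X1 := FintypeCat.homMk (fun x => x.elim)

/-- Elementwise criterion implies pullback in `FintypeCat`. -/
lemma aux_isPullback_of {P X Y Z : FintypeCat.{0}} (fst : P ⟶ X) (snd : P ⟶ Y)
    (g : X ⟶ Z) (h : Y ⟶ Z) (comm : fst ≫ g = snd ≫ h)
    (H : ∀ x y, g x = h y → ∃! p : P, fst p = x ∧ snd p = y) :
    IsPullback fst snd g h := by
  refine IsPullback.of_isLimit' ⟨comm⟩ (PullbackCone.IsLimit.mk _ ?_ ?_ ?_ ?_)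
  · intro s
    exact FintypeCat.homMk fun w => (H (s.fst w) (s.snd w) (ConcreteCategory.congr_hom s.condition w)).exists.choose
  · intro s
    exact FintypeCat.hom_ext _ _ fun w => (H (s.fst w) (s.snd w) (ConcreteCategory.congr_hom s.condition w)).exists.choose_spec.1
  · intro s
    exact FintypeCat.hom_ext _ _ fun w => (H (s.fst w) (s.snd w) (ConcreteCategory.congr_hom s.condition w)).exists.choose_spec.2
  · intro s m h1 h2
    refine FintypeCat.hom_ext _ _ fun w => ?_
    exact (H (s.fst w) (s.snd w) (ConcreteCategory.congr_hom s.condition w)).unique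
      ⟨ConcreteCategory.congr_hom h1 w, ConcreteCategory.congr_hom h2 w⟩
      ⟨(H (s.fst w) (s.snd w) (ConcreteCategory.congr_hom s.condition w)).exists.choose_spec.1,
       (H (s.fst w) (s.snd w) (ConcreteCategory.congr_hom s.condition w)).exists.choose_spec.2⟩

/-- Pullback in `FintypeCat` implies elementwise criterion. -/
lemma aux_pullback_existsUnique {P X Y Z : FintypeCat.{0}} {fst : P ⟶ X} {snd : P ⟶ Y}
    {g : X ⟶ Z} {h : Y ⟶ Z} (hp : IsPullback fst snd g h) (x : X) (y : Y)
    (hxy : g x = h y) : ∃! p : P, fst p = x ∧ snd p = y := by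
  have hc : (FintypeCat.homMk fun _ => x : X1 ⟶ X) ≫ g = (FintypeCat.homMk fun _ => y : X1 ⟶ Y) ≫ h :=
    FintypeCat.hom_ext _ _ fun _ => hxy
  refine ⟨hp.lift _ _ hc PUnit.unit,
    ⟨ConcreteCategory.congr_hom (hp.lift_fst _ _ hc) PUnit.unit, ConcreteCategory.congr_hom (hp.lift_snd _ _ hc) PUnit.unit⟩, ?_⟩
  rintro p ⟨h1, h2⟩
  have := hp.hom_ext (k := (FintypeCat.homMk fun _ => p : X1 ⟶ P)) (l := hp.lift _ _ hc)
    (FintypeCat.hom_ext _ _ fun a => by cases a; rw [ConcreteCategory.congr_hom (hp.lift_fst _ _ hc) PUnit.unit]; exact h1)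
    (FintypeCat.hom_ext _ _ fun a => by cases a; rw [ConcreteCategory.congr_hom (hp.lift_snd _ _ hc) PUnit.unit]; exact h2)
  exact ConcreteCategory.congr_hom this PUnit.unit

/-- The component formula for a natural transformation between Dirichlet sums. -/
lemma aux_key {I J : Type} [Fintype I] [Fintype J] (d : I → FintypeCat.{0})
    (d' : J → FintypeCat.{0}) (f : dirichletSum d ⟶ dirichletSum d')
    (X : FintypeCat.{0}ᵒᵖ) (i : I) (s : X.unop ⟶ d i) :
    f.app X (⟨i, s⟩ : Σ i, (X.unop ⟶ d i)) =
      (⟨(f.app (op (d i)) (⟨i, 𝟙 (d i)⟩ : Σ i', (d i ⟶ d i'))).1,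
        s ≫ (f.app (op (d i)) (⟨i, 𝟙 (d i)⟩ : Σ i', (d i ⟶ d i'))).2⟩ : Σ j, (X.unop ⟶ d' j)) :=
  ConcreteCategory.congr_hom (f.naturality (s.op : op (d i) ⟶ X)) (⟨i, 𝟙 (d i)⟩ : Σ i', (d i ⟶ d i'))

/-- The unique map out of the empty finite set. -/
def emptyMap (A : FintypeCat.{0}) : X0 ⟶ A := FintypeCat.homMk fun x => x.elim

lemma emptyMap_unique {A : FintypeCat.{0}} (h : X0 ⟶ A) : h = emptyMap A :=
  FintypeCat.hom_ext _ _ fun x => x.elim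

/-- Core lemma: for concrete Dirichlet sums, the 0-1 square being a pullback implies
every naturality square is a pullback. -/
lemma aux_core {I J : Type} [Fintype I] [Fintype J] (d : I → FintypeCat.{0})
    (d' : J → FintypeCat.{0}) (f : dirichletSum d ⟶ dirichletSum d')
    (hsq : IsPullback (f.app (op X1)) ((dirichletSum d).map zeroToOne.op)
      ((dirichletSum d').map zeroToOne.op) (f.app (op X0)))
    (X Y : FintypeCat.{0}ᵒᵖ) (g : X ⟶ Y) :
    IsPullback (f.app X) ((dirichletSum d).map g) ((dirichletSum d').map g) (f.app Y) := by
  set u : ∀ i : I, Σ j, (d i ⟶ d' j) := fun i => f.app (op (d i)) (⟨i, 𝟙 (d i)⟩ : Σ i', (d i ⟶ d i')) with hu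
  -- bijectivity of each component map
  have hbij : ∀ i : I, Function.Bijective (u i).2 := by
    intro i
    constructor
    · -- injective
      intro z₁ z₂ hz
      have hcomp : (dirichletSum d').map zeroToOne.op
            (⟨(u i).1, FintypeCat.homMk fun _ => (u i).2 z₁⟩ : Σ j, (X1 ⟶ d' j)) =
          f.app (op X0) (⟨i, emptyMap (d i)⟩ : Σ i', (X0 ⟶ d i')) := by
        rw [aux_key d d' f (op X0) i (emptyMap (d i))]
        exact Sigma.ext rfl (heq_of_eq (FintypeCat.hom_ext _ _ fun x => x.elim))
      obtain ⟨c, -, hcu⟩ := aux_pullback_existsUnique hsq _ _ hcomp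
      have h1 : c = (⟨i, FintypeCat.homMk fun _ => z₁⟩ : Σ i', (X1 ⟶ d i')) := by
        refine (hcu _ ⟨?_, ?_⟩).symm
        · rw [aux_key d d' f (op X1) i (FintypeCat.homMk fun _ => z₁)]
          rfl
        · exact Sigma.ext rfl (heq_of_eq (FintypeCat.hom_ext _ _ fun x => x.elim))
      have h2 : c = (⟨i, FintypeCat.homMk fun _ => z₂⟩ : Σ i', (X1 ⟶ d i')) := by
        refine (hcu _ ⟨?_, ?_⟩).symm
        · rw [aux_key d d' f (op X1) i (FintypeCat.homMk fun _ => z₂)]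
          exact Sigma.ext rfl (heq_of_eq (FintypeCat.hom_ext _ _ fun _ => hz.symm))
        · exact Sigma.ext rfl (heq_of_eq (FintypeCat.hom_ext _ _ fun x => x.elim))
      have := h1.symm.trans h2
      exact ConcreteCategory.congr_hom (eq_of_heq (Sigma.mk.inj_iff.mp this).2) PUnit.unit
    · -- surjective
      intro y
      have hcomp : (dirichletSum d').map zeroToOne.op
            (⟨(u i).1, FintypeCat.homMk fun _ => y⟩ : Σ j, (X1 ⟶ d' j)) =
          f.app (op X0) (⟨i, emptyMap (d i)⟩ : Σ i', (X0 ⟶ d i')) := by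
        rw [aux_key d d' f (op X0) i (emptyMap (d i))]
        exact Sigma.ext rfl (heq_of_eq (FintypeCat.hom_ext _ _ fun x => x.elim))
      obtain ⟨⟨i', x⟩, ⟨hc1, hc2⟩, -⟩ := (aux_pullback_existsUnique hsq _ _ hcomp :
          ∃! p : Σ i', (X1 ⟶ d i'), _)
      -- from hc2 : ⟨i', zeroToOne ≫ x⟩ = ⟨i, emptyMap⟩ we get i' = i
      have hii : i' = i := congrArg Sigma.fst hc2
      subst hii
      rw [aux_key d d' f (op X1) i' x] at hc1
      exact ⟨x PUnit.unit, ConcreteCategory.congr_hom (eq_of_heq (Sigma.mk.inj_iff.mp hc1).2) PUnit.unit⟩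
  -- now prove the general square is a pullback
  refine aux_isPullback_of _ _ _ _ (f.naturality g).symm ?_
  rintro (⟨j, t⟩ : Σ j, (X.unop ⟶ d' j)) (⟨i, s⟩ : Σ i, (Y.unop ⟶ d i)) hxy
  rw [aux_key d d' f Y i s] at hxy
  -- hxy : ⟨j, g.unop ≫ t⟩ = ⟨(u i).1, s ≫ (u i).2⟩
  have hji : j = (u i).1 := congrArg Sigma.fst hxy
  subst hji
  have hts' : g.unop ≫ t = s ≫ (u i).2 := eq_of_heq (Sigma.mk.inj_iff.mp hxy).2
  set E := Equiv.ofBijective _ (hbij i) with hE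
  refine ⟨(⟨i, t ≫ FintypeCat.homMk (fun z => E.symm z)⟩ : Σ i, (X.unop ⟶ d i)), ⟨?_, ?_⟩, ?_⟩
  · rw [aux_key d d' f X i _]
    refine Sigma.ext rfl (heq_of_eq (FintypeCat.hom_ext _ _ fun w => ?_))
    show (u i).2 (E.symm (t w)) = t w
    exact E.apply_symm_apply (t w)
  · show (⟨i, g.unop ≫ (t ≫ FintypeCat.homMk fun z => E.symm z)⟩ : Σ i, (Y.unop ⟶ d i)) = ⟨i, s⟩
    refine Sigma.ext rfl (heq_of_eq (FintypeCat.hom_ext _ _ fun w => ?_))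
    show E.symm (t (g.unop w)) = s w
    have : t (g.unop w) = E (s w) := ConcreteCategory.congr_hom hts' w
    rw [this, E.symm_apply_apply]
  · rintro (⟨i', r⟩ : Σ i, (X.unop ⟶ d i)) ⟨hr1, hr2⟩
    have hii : i' = i := congrArg Sigma.fst hr2
    subst hii
    rw [aux_key d d' f X i' r] at hr1
    have hr' : r ≫ (u i').2 = t := (eq_of_heq (Sigma.mk.inj_iff.mp hr1).2).symm.symm
    refine Sigma.ext rfl (heq_of_eq (FintypeCat.hom_ext _ _ fun w => ?_))
    show r w = E.symm (t w)
    have : t w = E (r w) := (ConcreteCategory.congr_hom hr' w).symm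
    rw [this, E.symm_apply_apply]

theorem cartesian_iff_zeroOne_square_pullback
    (D D' : FintypeCat.{0}ᵒᵖ ⥤ FintypeCat.{0})
    (hD : IsDirichlet D) (hD' : IsDirichlet D') (f : D ⟶ D') :
    (∀ (X Y : FintypeCat.{0}ᵒᵖ) (g : X ⟶ Y),
        IsPullback (f.app X) (D.map g) (D'.map g) (f.app Y)) ↔
      IsPullback (f.app (op X1)) (D.map zeroToOne.op) (D'.map zeroToOne.op)
        (f.app (op X0)) := by
  constructor
  · intro h
    exact h _ _ _
  · intro hsq X Y g
    obtain ⟨I, _, d, ⟨e⟩⟩ := hD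
    obtain ⟨J, _, d', ⟨e'⟩⟩ := hD'
    set f' : dirichletSum d ⟶ dirichletSum d' := e.inv ≫ f ≫ e'.hom with hf'
    -- transfer the hypothesis square to f'
    have hsq' : IsPullback (f'.app (op X1)) ((dirichletSum d).map zeroToOne.op)
        ((dirichletSum d').map zeroToOne.op) (f'.app (op X0)) := by
      refine hsq.of_iso (e.app (op X1)) (e'.app (op X1)) (e.app (op X0)) (e'.app (op X0))
        ?_ ?_ ?_ ?_
      · simp [hf']
      · exact e.hom.naturality zeroToOne.op
      · exact e'.hom.naturality zeroToOne.op
      · simp [hf']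
    have hmain := aux_core d d' f' hsq' X Y g
    -- transfer back
    refine hmain.of_iso (e.app X).symm (e'.app X).symm (e.app Y).symm (e'.app Y).symm
      ?_ ?_ ?_ ?_
    · simp [hf']
    · exact e.inv.naturality g
    · exact e'.inv.naturality g
    · simp [hf']
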